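/- arXiv:2209.03775 — 2 statements merged into one kernel-verified Lean document; each statement's English description precedes it below -/
import Mathlib

section
/- For every integer p ≥ 1 and every real x ∈ [0,1], ∑_{n≥0} Q_{n,p}(x) = 1. -/
open MeasureTheory intervalIntegral

/-- `Q n p x` : probability that a dart game with `p` remaining players, where the
probability of beating the best throw so far is `x`, ends after exactly `n` further throws. -/
noncomputable def Q : ℕ → ℕ → ℝ → ℝ
  | 0, p, _ => if p = 1 then 1 else 0
  | n + 1, p, x =>
      if p ≤ 1 then 0
      else (1 - x) * Q n (p - 1) x + ∫ v in (0:ℝ)..x, Q n p v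

lemma Q_continuous : ∀ (n p : ℕ), Continuous (Q n p)
  | 0, p => by
    have h : Q 0 p = fun _ : ℝ => if p = 1 then (1:ℝ) else 0 := rfl
    rw [h]; exact continuous_const
  | n + 1, p => by
    by_cases hp : p ≤ 1
    · have h : Q (n + 1) p = fun _ : ℝ => (0:ℝ) := by
        funext x; simp [Q, hp]
      rw [h]; exact continuous_const
    · have h1 := Q_continuous n (p - 1)
      have h2 := Q_continuous n p
      have h : Q (n + 1) p
          = fun x : ℝ => (1 - x) * Q n (p - 1) x + ∫ v in (0:ℝ)..x, Q n p v := by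
        funext x; simp [Q, hp]
      rw [h]
      exact ((continuous_const.sub continuous_id).mul h1).add
        (intervalIntegral.continuous_primitive (fun a b => h2.intervalIntegrable a b) 0)

lemma Q_nonneg : ∀ (n p : ℕ) (x : ℝ), x ∈ Set.Icc (0:ℝ) 1 → 0 ≤ Q n p x := by
  intro n
  induction n with
  | zero =>
    intro p x _
    by_cases hp : p = 1 <;> simp [Q, hp]
  | succ n ih =>
    intro p x hx
    by_cases hp : p ≤ 1
    · simp [Q, hp]
    · have h : Q (n + 1) p x
          = (1 - x) * Q n (p - 1) x + ∫ v in (0:ℝ)..x, Q n p v := by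
        simp [Q, hp]
      rw [h]
      have h1 : 0 ≤ (1 - x) * Q n (p - 1) x :=
        mul_nonneg (by linarith [hx.2]) (ih (p - 1) x hx)
      have h2 : 0 ≤ ∫ v in (0:ℝ)..x, Q n p v :=
        intervalIntegral.integral_nonneg hx.1
          (fun u hu => ih p u ⟨hu.1, hu.2.trans hx.2⟩)
      linarith

/-- Partial sums of `Q`. -/
noncomputable def S (N p : ℕ) (x : ℝ) : ℝ := ∑ n ∈ Finset.range N, Q n p x

lemma S_continuous (N p : ℕ) : Continuous (S N p) := by
  unfold S
  exact continuous_finset_sum _ fun i _ => Q_continuous i p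

lemma S_one (N : ℕ) (hN : 1 ≤ N) (x : ℝ) : S N 1 x = 1 := by
  obtain ⟨M, rfl⟩ : ∃ M, N = M + 1 := ⟨N - 1, by omega⟩
  unfold S
  rw [Finset.sum_range_succ']
  have h0 : Q 0 1 x = 1 := by simp [Q]
  have h1 : ∀ i, Q (i + 1) 1 x = 0 := fun i => by simp [Q]
  simp [h0, h1]

lemma S_rec (N p : ℕ) (hp : 2 ≤ p) (x : ℝ) :
    S (N + 1) p x = (1 - x) * S N (p - 1) x + ∫ v in (0:ℝ)..x, S N p v := by
  have hple : ¬ p ≤ 1 := by omega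
  have hp1 : p ≠ 1 := by omega
  unfold S
  rw [Finset.sum_range_succ']
  have h0 : Q 0 p x = 0 := by simp [Q, hp1]
  have h1 : ∀ i, Q (i + 1) p x
      = (1 - x) * Q i (p - 1) x + ∫ v in (0:ℝ)..x, Q i p v := fun i => by
    simp [Q, hple]
  rw [h0, add_zero]
  have h2 : (∑ i ∈ Finset.range N, Q (i + 1) p x)
      = ∑ i ∈ Finset.range N,
        ((1 - x) * Q i (p - 1) x + ∫ v in (0:ℝ)..x, Q i p v) :=
    Finset.sum_congr rfl fun i _ => h1 i
  rw [h2, Finset.sum_add_distrib, ← Finset.mul_sum]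
  congr 1
  rw [intervalIntegral.integral_finset_sum]
  intro i _
  exact (Q_continuous i p).intervalIntegrable _ _

lemma S_le_one : ∀ (N p : ℕ), 1 ≤ p → ∀ x : ℝ, x ∈ Set.Icc (0:ℝ) 1 → S N p x ≤ 1 := by
  intro N
  induction N with
  | zero => intro p _ x _; simp [S]
  | succ N ih =>
    intro p hp x hx
    rcases eq_or_lt_of_le hp with h1 | h2
    · subst h1
      rw [S_one (N + 1) (by omega) x]
    · have hp2 : 2 ≤ p := h2
      rw [S_rec N p hp2 x]
      have hint : (∫ v in (0:ℝ)..x, S N p v) ≤ x := by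
        have := intervalIntegral.integral_mono_on (μ := volume) hx.1
          ((S_continuous N p).intervalIntegrable _ _)
          (_root_.intervalIntegrable_const (c := (1:ℝ)))
          (fun u hu => ih p (by omega) u ⟨hu.1, hu.2.trans hx.2⟩)
        simpa using this
      have hmul : (1 - x) * S N (p - 1) x ≤ (1 - x) * 1 :=
        mul_le_mul_of_nonneg_left (ih (p - 1) (by omega) x hx) (by linarith [hx.2])
      linarith

/-- The explicit bound on the tail probability. -/
noncomputable def B (N p : ℕ) (x : ℝ) : ℝ :=
  ∑ j ∈ Finset.range p, (N.choose j : ℝ) * x ^ (N - j) / (N - j).factorial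

lemma B_nonneg (N p : ℕ) (x : ℝ) (hx : 0 ≤ x) : 0 ≤ B N p x := by
  refine Finset.sum_nonneg fun j _ => ?_
  positivity

lemma B_zero (p : ℕ) (hp : 1 ≤ p) (x : ℝ) : B 0 p x = 1 := by
  unfold B
  rw [Finset.sum_eq_single 0]
  · simp
  · intro j _ hj
    have : (0:ℕ).choose j = 0 := Nat.choose_eq_zero_of_lt (by omega)
    simp [this]
  · intro h; exact absurd (Finset.mem_range.2 (by omega)) h

lemma B_continuous (N p : ℕ) : Continuous (B N p) := by
  unfold B
  exact continuous_finset_sum _ fun j _ => by continuity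

lemma integral_monomial (c : ℝ) (k : ℕ) (x : ℝ) :
    (∫ v in (0:ℝ)..x, c * v ^ k / (k.factorial : ℝ))
      = c * x ^ (k + 1) / ((k + 1).factorial : ℝ) := by
  have h : ∀ v : ℝ, c * v ^ k / (k.factorial : ℝ) = (c / (k.factorial : ℝ)) * v ^ k :=
    fun v => by ring
  simp only [h, intervalIntegral.integral_const_mul, integral_pow]
  have hk : ((k.factorial : ℝ)) ≠ 0 := Nat.cast_ne_zero.2 (Nat.factorial_ne_zero k)
  have hk1 : ((k:ℝ) + 1) ≠ 0 := by positivity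
  rw [Nat.factorial_succ]
  have h0 : (0:ℝ) ^ (k + 1) = 0 := zero_pow (by omega)
  rw [h0, sub_zero]
  push_cast
  field_simp

lemma B_integral (N p : ℕ) (x : ℝ) :
    (∫ v in (0:ℝ)..x, B N p v)
      = ∑ j ∈ Finset.range p, (N.choose j : ℝ) * x ^ (N - j + 1) / ((N - j + 1).factorial : ℝ) := by
  unfold B
  rw [intervalIntegral.integral_finset_sum (fun j _ => by
    apply Continuous.intervalIntegrable; continuity)]
  exact Finset.sum_congr rfl fun j _ => integral_monomial _ _ x

lemma B_rec (N p : ℕ) (hp : 2 ≤ p) (x : ℝ) (hx : x ∈ Set.Icc (0:ℝ) 1) :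
    (1 - x) * B N (p - 1) x + (∫ v in (0:ℝ)..x, B N p v) ≤ B (N + 1) p x := by
  have key : B (N + 1) p x
      = B N (p - 1) x
        + ∑ j ∈ Finset.range p,
            (N.choose j : ℝ) * x ^ (N - j + 1) / ((N - j + 1).factorial : ℝ) := by
    unfold B
    obtain ⟨q, rfl⟩ : ∃ q, p = q + 1 := ⟨p - 1, by omega⟩
    rw [Finset.sum_range_succ' (fun j =>
      ((N + 1).choose j : ℝ) * x ^ (N + 1 - j) / ((N + 1 - j).factorial : ℝ)) q]
    rw [Finset.sum_range_succ' (fun j =>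
      (N.choose j : ℝ) * x ^ (N - j + 1) / ((N - j + 1).factorial : ℝ)) q]
    have hterm : ∀ j, ((N + 1).choose (j + 1) : ℝ) * x ^ (N + 1 - (j + 1))
          / ((N + 1 - (j + 1)).factorial : ℝ)
        = (N.choose j : ℝ) * x ^ (N - j) / ((N - j).factorial : ℝ)
          + (N.choose (j + 1) : ℝ) * x ^ (N - (j + 1) + 1)
              / ((N - (j + 1) + 1).factorial : ℝ) := by
      intro j
      have hc : (N + 1).choose (j + 1) = N.choose j + N.choose (j + 1) :=
        Nat.choose_succ_succ N j
      have he1 : N + 1 - (j + 1) = N - j := by omega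
      by_cases hj : j + 1 ≤ N
      · have he2 : N - (j + 1) + 1 = N - j := by omega
        rw [hc, he1, he2]
        push_cast
        ring
      · have hc2 : N.choose (j + 1) = 0 := Nat.choose_eq_zero_of_lt (by omega)
        rw [hc, hc2, he1]
        push_cast
        ring
    simp only [hterm]
    rw [Finset.sum_add_distrib]
    have h0 : ((N + 1).choose 0 : ℝ) * x ^ (N + 1 - 0) / ((N + 1 - 0).factorial : ℝ)
        = (N.choose 0 : ℝ) * x ^ (N - 0 + 1) / ((N - 0 + 1).factorial : ℝ) := by
      norm_num
    rw [h0]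
    simp only [Nat.add_sub_cancel]
    ring
  have hB1 : 0 ≤ B N (p - 1) x := B_nonneg _ _ _ hx.1
  have hxB : 0 ≤ x * B N (p - 1) x := mul_nonneg hx.1 hB1
  rw [B_integral, key]
  nlinarith

lemma R_le_B : ∀ (N p : ℕ), 1 ≤ p → ∀ x : ℝ, x ∈ Set.Icc (0:ℝ) 1 →
    1 - S N p x ≤ B N p x := by
  intro N
  induction N with
  | zero =>
    intro p hp x hx
    simp [S, B_zero p hp x]
  | succ N ih =>
    intro p hp x hx
    rcases eq_or_lt_of_le hp with h1 | h2
    · rw [← h1, S_one (N + 1) (by omega) x]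
      simpa using B_nonneg (N + 1) 1 x hx.1
    · have hp2 : 2 ≤ p := h2
      have hrec : 1 - S (N + 1) p x
          = (1 - x) * (1 - S N (p - 1) x) + ∫ v in (0:ℝ)..x, (1 - S N p v) := by
        rw [S_rec N p hp2 x,
          intervalIntegral.integral_sub (_root_.intervalIntegrable_const (c := (1:ℝ)))
            ((S_continuous N p).intervalIntegrable _ _)]
        simp
        ring
      have h1 : (1 - x) * (1 - S N (p - 1) x) ≤ (1 - x) * B N (p - 1) x :=
        mul_le_mul_of_nonneg_left (ih (p - 1) (by omega) x hx) (by linarith [hx.2])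
      have h2' : (∫ v in (0:ℝ)..x, (1 - S N p v)) ≤ ∫ v in (0:ℝ)..x, B N p v := by
        apply intervalIntegral.integral_mono_on (μ := volume) hx.1
          ((continuous_const.sub (S_continuous N p)).intervalIntegrable _ _)
          ((B_continuous N p).intervalIntegrable _ _)
        intro u hu
        exact ih p hp u ⟨hu.1, hu.2.trans hx.2⟩
      have h3 := B_rec N p hp2 x hx
      linarith [hrec]

lemma choose_le_two_pow (N j : ℕ) : N.choose j ≤ 2 ^ N := by
  rcases le_or_gt j N with h | h
  · calc N.choose j ≤ ∑ m ∈ Finset.range (N + 1), N.choose m :=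
          Finset.single_le_sum (fun i _ => Nat.zero_le _) (Finset.mem_range.2 (by omega))
    _ = 2 ^ N := Nat.sum_range_choose N
  · simp [Nat.choose_eq_zero_of_lt h]

lemma B_le (N p : ℕ) (hp : 1 ≤ p) (x : ℝ) (hx : x ∈ Set.Icc (0:ℝ) 1) :
    B N p x ≤ (p : ℝ) * 2 ^ N / ((N - (p - 1)).factorial : ℝ) := by
  have hbound : ∀ j ∈ Finset.range p,
      (N.choose j : ℝ) * x ^ (N - j) / ((N - j).factorial : ℝ)
        ≤ (2:ℝ) ^ N / ((N - (p - 1)).factorial : ℝ) := by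
    intro j hj
    have hj' : j ≤ p - 1 := by have := Finset.mem_range.1 hj; omega
    have hnum : (N.choose j : ℝ) * x ^ (N - j) ≤ (2:ℝ) ^ N := by
      have h1 : (N.choose j : ℝ) ≤ (2:ℝ) ^ N := by
        exact_mod_cast Nat.cast_le.2 (choose_le_two_pow N j)
      have h2 : x ^ (N - j) ≤ 1 := pow_le_one₀ hx.1 hx.2
      have h3 : (0:ℝ) ≤ x ^ (N - j) := pow_nonneg hx.1 _
      nlinarith [Nat.cast_nonneg (α := ℝ) (N.choose j)]
    have hden : ((N - (p - 1)).factorial : ℝ) ≤ ((N - j).factorial : ℝ) := by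
      exact_mod_cast Nat.cast_le.2 (Nat.factorial_le (by omega))
    have hdpos : (0:ℝ) < ((N - (p - 1)).factorial : ℝ) := by
      exact_mod_cast Nat.cast_pos.2 (Nat.factorial_pos _)
    exact div_le_div₀ ((pow_nonneg (by norm_num) N)) hnum hdpos hden
  calc B N p x ≤ ∑ _j ∈ Finset.range p, (2:ℝ) ^ N / ((N - (p - 1)).factorial : ℝ) :=
        Finset.sum_le_sum hbound
    _ = (p : ℝ) * 2 ^ N / ((N - (p - 1)).factorial : ℝ) := by
        rw [Finset.sum_const, Finset.card_range, nsmul_eq_mul]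
        ring

lemma B_tendsto_zero (p : ℕ) (hp : 1 ≤ p) (x : ℝ) (hx : x ∈ Set.Icc (0:ℝ) 1) :
    Filter.Tendsto (fun N => B N p x) Filter.atTop (nhds 0) := by
  apply squeeze_zero (fun N => B_nonneg N p x hx.1) (fun N => B_le N p hp x hx)
  exact FloorSemiring.tendsto_mul_pow_div_factorial_sub_atTop (p : ℝ) 2 (p - 1)

/-- For every `p ≥ 1` and `x ∈ [0,1]`, `∑_{n≥0} Q_{n,p}(x) = 1`: the `Q_{n,p}(x)` form a
probability distribution in `n`. -/
theorem Q_hasSum_one (p : ℕ) (hp : 1 ≤ p) (x : ℝ) (hx : x ∈ Set.Icc (0:ℝ) 1) :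
    HasSum (fun n : ℕ => Q n p x) 1 := by
  rw [hasSum_iff_tendsto_nat_of_nonneg (fun n => Q_nonneg n p x hx)]
  have h0 : Filter.Tendsto (fun N => 1 - S N p x) Filter.atTop (nhds 0) :=
    squeeze_zero (fun N => by linarith [S_le_one N p hp x hx])
      (fun N => R_le_B N p hp x hx) (B_tendsto_zero p hp x hx)
  have h1 : Filter.Tendsto (fun N => 1 - (1 - S N p x)) Filter.atTop (nhds (1 - 0)) :=
    Filter.Tendsto.const_sub 1 h0
  simp only [sub_sub_cancel, sub_zero] at h1
  exact h1
end

section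
/- For x ∈ [0,1] and z ∈ [0,1), define R_{p,k}(x,z) := ∑_{n≥0} R_{n,p,k}(x)·z^n. Then for every integer p ≥ 2 and all x ∈ [0,1], z ∈ [0,1): R_{p,1}(x,z) = z·∫_0^x R_{p,p}(v,z) dv, and for every 2 ≤ k ≤ p, R_{p,k}(x,z) = (1−x)·z·R_{p−1,k−1}(x,z) + z·∫_0^x R_{p,k−1}(v,z) dv, where R_{1,1}(x,z) = 1. -/
open MeasureTheory intervalIntegral

/-- `R n p k x` : probability that, in a dart game with `p` remaining players where the
probability of beating the best throw so far is `x`, the `k`-th player in throwing order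
wins after exactly `n` further throws. -/
noncomputable def R : ℕ → ℕ → ℕ → ℝ → ℝ
  | 0, p, k, _ => if p = 1 ∧ k = 1 then 1 else 0
  | n + 1, p, k, x =>
      if p ≤ 1 then 0
      else if k = 1 then ∫ v in (0:ℝ)..x, R n p p v
      else (1 - x) * R n (p - 1) (k - 1) x + ∫ v in (0:ℝ)..x, R n p (k - 1) v

/-- `Rgen p k x z = ∑_{n≥0} R_{n,p,k}(x)·z^n`, the generating function of the
probabilities `R_{n,p,k}(x)` by the number of throws. -/
noncomputable def Rgen (p k : ℕ) (x z : ℝ) : ℝ := ∑' n : ℕ, R n p k x * z ^ n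

lemma R_cont (n : ℕ) : ∀ p k : ℕ, Continuous fun x => R n p k x := by
  induction n with
  | zero => intro p k; simp only [R]; exact continuous_const
  | succ n ih =>
    intro p k
    by_cases hp : p ≤ 1
    · simp only [R, if_pos hp]; exact continuous_const
    · by_cases hk : k = 1
      · simp only [R, if_neg hp, if_pos hk]
        exact intervalIntegral.continuous_primitive
          (fun a b => ((ih p p)).intervalIntegrable a b) 0
      · simp only [R, if_neg hp, if_neg hk]
        exact ((continuous_const.sub continuous_id).mul (ih (p - 1) (k - 1))).add
          (intervalIntegral.continuous_primitive
            (fun a b => (ih p (k - 1)).intervalIntegrable a b) 0)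

lemma R_mem (n : ℕ) : ∀ p k : ℕ, ∀ x ∈ Set.Icc (0:ℝ) 1, R n p k x ∈ Set.Icc (0:ℝ) 1 := by
  induction n with
  | zero =>
    intro p k x _
    simp only [R]
    split <;> norm_num
  | succ n ih =>
    intro p k x hx
    obtain ⟨hx0, hx1⟩ := hx
    have hI : ∀ q l : ℕ, (∫ v in (0:ℝ)..x, R n q l v) ∈ Set.Icc (0:ℝ) x := by
      intro q l
      constructor
      · apply intervalIntegral.integral_nonneg hx0
        intro v hv; exact (ih q l v ⟨hv.1, hv.2.trans hx1⟩).1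
      · calc (∫ v in (0:ℝ)..x, R n q l v) ≤ ∫ _ in (0:ℝ)..x, (1:ℝ) := by
              apply intervalIntegral.integral_mono_on hx0
                ((R_cont n q l).intervalIntegrable 0 x) intervalIntegrable_const
              intro v hv; exact (ih q l v ⟨hv.1, hv.2.trans hx1⟩).2
            _ = x := by simp
    by_cases hp : p ≤ 1
    · simp only [R, if_pos hp]; constructor <;> norm_num
    · by_cases hk : k = 1
      · simp only [R, if_neg hp, if_pos hk]
        exact ⟨(hI p p).1, (hI p p).2.trans hx1⟩
      · simp only [R, if_neg hp, if_neg hk]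
        have h1 : (1 - x) * R n (p - 1) (k - 1) x ≤ 1 - x :=
          mul_le_of_le_one_right (by linarith) (ih (p - 1) (k - 1) x ⟨hx0, hx1⟩).2
        have h2 : 0 ≤ (1 - x) * R n (p - 1) (k - 1) x :=
          mul_nonneg (by linarith) (ih (p - 1) (k - 1) x ⟨hx0, hx1⟩).1
        constructor
        · have := (hI p (k - 1)).1; linarith
        · have := (hI p (k - 1)).2; linarith

lemma R_integral_mem (n p k : ℕ) {x : ℝ} (hx : x ∈ Set.Icc (0:ℝ) 1) :
    (∫ v in (0:ℝ)..x, R n p k v) ∈ Set.Icc (0:ℝ) 1 := by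
  obtain ⟨hx0, hx1⟩ := hx
  constructor
  · apply intervalIntegral.integral_nonneg hx0
    intro v hv; exact (R_mem n p k v ⟨hv.1, hv.2.trans hx1⟩).1
  · calc (∫ v in (0:ℝ)..x, R n p k v) ≤ ∫ _ in (0:ℝ)..x, (1:ℝ) := by
          apply intervalIntegral.integral_mono_on hx0
            ((R_cont n p k).intervalIntegrable 0 x) intervalIntegrable_const
          intro v hv; exact (R_mem n p k v ⟨hv.1, hv.2.trans hx1⟩).2
        _ = x := by simp
        _ ≤ 1 := hx1

lemma summable_aux {g : ℕ → ℝ} (hg : ∀ n, g n ∈ Set.Icc (0:ℝ) 1) {z : ℝ}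
    (hz : z ∈ Set.Ico (0:ℝ) 1) : Summable fun n => g n * z ^ n := by
  apply Summable.of_nonneg_of_le
    (fun n => mul_nonneg (hg n).1 (pow_nonneg hz.1 n))
    (fun n => mul_le_of_le_one_left (pow_nonneg hz.1 n) (hg n).2)
  exact summable_geometric_of_lt_one hz.1 hz.2

lemma R_summable (p k : ℕ) {x z : ℝ} (hx : x ∈ Set.Icc (0:ℝ) 1)
    (hz : z ∈ Set.Ico (0:ℝ) 1) : Summable fun n => R n p k x * z ^ n :=
  summable_aux (fun n => R_mem n p k x hx) hz

lemma swap_tsum_integral (p k : ℕ) {x z : ℝ} (hx : x ∈ Set.Icc (0:ℝ) 1)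
    (hz : z ∈ Set.Ico (0:ℝ) 1) :
    ∑' n : ℕ, (∫ v in (0:ℝ)..x, R n p k v) * z ^ n = ∫ v in (0:ℝ)..x, Rgen p k v z := by
  obtain ⟨hx0, hx1⟩ := hx
  have hmem : ∀ v ∈ Set.Ioc (0:ℝ) x, v ∈ Set.Icc (0:ℝ) 1 :=
    fun v hv => ⟨hv.1.le, hv.2.trans hx1⟩
  have hint : ∀ n : ℕ, Integrable (fun v => R n p k v * z ^ n)
      (volume.restrict (Set.Ioc (0:ℝ) x)) := by
    intro n
    exact ((R_cont n p k).mul continuous_const).integrableOn_Ioc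
  have hswap := MeasureTheory.integral_tsum_of_summable_integral_norm
    (F := fun n v => R n p k v * z ^ n) (μ := volume.restrict (Set.Ioc (0:ℝ) x)) hint ?_
  · calc ∑' n : ℕ, (∫ v in (0:ℝ)..x, R n p k v) * z ^ n
        = ∑' n : ℕ, ∫ v in Set.Ioc (0:ℝ) x, R n p k v * z ^ n := by
          congr 1; funext n
          rw [intervalIntegral.integral_of_le hx0, ← MeasureTheory.integral_mul_const]
      _ = ∫ v in Set.Ioc (0:ℝ) x, ∑' n : ℕ, R n p k v * z ^ n := hswap
      _ = ∫ v in (0:ℝ)..x, Rgen p k v z := by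
          rw [intervalIntegral.integral_of_le hx0]; rfl
  · apply Summable.of_nonneg_of_le
      (fun n => MeasureTheory.integral_nonneg (fun v => norm_nonneg _))
      (fun n => ?_)
    · exact (summable_geometric_of_lt_one hz.1 hz.2).mul_left x
    · calc ∫ v in Set.Ioc (0:ℝ) x, ‖R n p k v * z ^ n‖
          ≤ ∫ _ in Set.Ioc (0:ℝ) x, z ^ n := by
            apply MeasureTheory.setIntegral_mono_on (hint n).norm
              (MeasureTheory.integrableOn_const measure_Ioc_lt_top.ne enorm_ne_top)
              measurableSet_Ioc
            intro v hv
            rw [norm_mul, norm_pow, Real.norm_of_nonneg hz.1]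
            exact mul_le_of_le_one_left (pow_nonneg hz.1 n)
              (abs_le.2 ⟨by linarith [(R_mem n p k v (hmem v hv)).1],
                (R_mem n p k v (hmem v hv)).2⟩)
        _ = x * z ^ n := by
            rw [MeasureTheory.setIntegral_const, MeasureTheory.measureReal_def, Real.volume_Ioc, smul_eq_mul]
            rw [ENNReal.toReal_ofReal (by linarith)]
            ring_nf

/-- For `p ≥ 2`, `x ∈ [0,1]`, `z ∈ [0,1)`:
`R_{p,1}(x,z) = z·∫_0^x R_{p,p}(v,z) dv` and, for `2 ≤ k ≤ p`,
`R_{p,k}(x,z) = (1−x)·z·R_{p−1,k−1}(x,z) + z·∫_0^x R_{p,k−1}(v,z) dv`. -/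
theorem Rgen_recurrence (p : ℕ) (hp : 2 ≤ p) (x z : ℝ) (hx : x ∈ Set.Icc (0:ℝ) 1)
    (hz : z ∈ Set.Ico (0:ℝ) 1) :
    Rgen p 1 x z = z * ∫ v in (0:ℝ)..x, Rgen p p v z ∧
    ∀ k : ℕ, 2 ≤ k → k ≤ p →
      Rgen p k x z =
        (1 - x) * z * Rgen (p - 1) (k - 1) x z + z * ∫ v in (0:ℝ)..x, Rgen p (k - 1) v z := by
  have hp1 : ¬ p ≤ 1 := by omega
  constructor
  · have hs := R_summable p 1 hx hz
    have h0 : R 0 p 1 x * z ^ 0 = 0 := by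
      simp only [R]; rw [if_neg (by omega)]; ring
    calc Rgen p 1 x z = ∑' n : ℕ, R (n + 1) p 1 x * z ^ (n + 1) := by
          rw [Rgen, Summable.tsum_eq_zero_add hs, h0, zero_add]
      _ = ∑' n : ℕ, z * ((∫ v in (0:ℝ)..x, R n p p v) * z ^ n) := by
          congr 1; funext n
          rw [show R (n + 1) p 1 x = ∫ v in (0:ℝ)..x, R n p p v from by
            simp only [R]; rw [if_neg hp1, if_pos trivial]]
          ring
      _ = z * ∑' n : ℕ, (∫ v in (0:ℝ)..x, R n p p v) * z ^ n := tsum_mul_left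
      _ = z * ∫ v in (0:ℝ)..x, Rgen p p v z := by rw [swap_tsum_integral p p hx hz]
  · intro k hk2 hkp
    have hk1 : k ≠ 1 := by omega
    have hs := R_summable p k hx hz
    have h0 : R 0 p k x * z ^ 0 = 0 := by
      simp only [R]; rw [if_neg (by omega)]; ring
    have hsum1 : Summable fun n : ℕ => (1 - x) * z * (R n (p - 1) (k - 1) x * z ^ n) :=
      (R_summable (p - 1) (k - 1) hx hz).mul_left _
    have hsum2 : Summable fun n : ℕ => z * ((∫ v in (0:ℝ)..x, R n p (k - 1) v) * z ^ n) :=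
      (summable_aux (fun n => R_integral_mem n p (k - 1) hx) hz).mul_left _
    calc Rgen p k x z = ∑' n : ℕ, R (n + 1) p k x * z ^ (n + 1) := by
          rw [Rgen, Summable.tsum_eq_zero_add hs, h0, zero_add]
      _ = ∑' n : ℕ, ((1 - x) * z * (R n (p - 1) (k - 1) x * z ^ n) +
            z * ((∫ v in (0:ℝ)..x, R n p (k - 1) v) * z ^ n)) := by
          congr 1; funext n
          rw [show R (n + 1) p k x = (1 - x) * R n (p - 1) (k - 1) x +
              ∫ v in (0:ℝ)..x, R n p (k - 1) v from by
            simp only [R]; rw [if_neg hp1, if_neg hk1]]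
          ring
      _ = (1 - x) * z * Rgen (p - 1) (k - 1) x z +
            z * ∑' n : ℕ, (∫ v in (0:ℝ)..x, R n p (k - 1) v) * z ^ n := by
          rw [Summable.tsum_add hsum1 hsum2, tsum_mul_left, tsum_mul_left]; rfl
      _ = (1 - x) * z * Rgen (p - 1) (k - 1) x z +
            z * ∫ v in (0:ℝ)..x, Rgen p (k - 1) v z := by
          rw [swap_tsum_integral p (k - 1) hx hz]
end
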